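/- Let M ≥ 1 and let δ : ℤ → ℝ be a sequence with δ n > 0 for all n that satisfies the quasisymmetric shear condition with constant M. Then for every x ∈ ℝ and every t > 5, 1/(3M³) ≤ (h_δ(x+t) − h_δ(x))/(h_δ(x) − h_δ(x−t)) ≤ 3M³. -/
import Mathlib

/-- `Hmap δ n` is the value at the integer `n` of the developing map:
`H 0 = 0`, `H (n+1) = H n + δ n`. -/
noncomputable def Hmap (δ : ℤ → ℝ) (n : ℤ) : ℝ :=
  if 0 ≤ n then ∑ j ∈ Finset.range n.toNat, δ j
  else -∑ j ∈ Finset.range (-n).toNat, δ (n + j)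

/-- The piecewise linear developing map associated to the sequence `δ`. -/
noncomputable def hdev (δ : ℤ → ℝ) (x : ℝ) : ℝ :=
  Hmap δ ⌊x⌋ + δ ⌊x⌋ * (x - (⌊x⌋ : ℝ))

/-- The quasisymmetric shear condition with constant `M` for a positive sequence `δ`:
`1/M ≤ (δ m + ⋯ + δ (m+k)) / (δ (m-1) + ⋯ + δ (m-k-1)) ≤ M`. -/
def ShearQS (δ : ℤ → ℝ) (M : ℝ) : Prop :=
  ∀ (m : ℤ) (k : ℕ),
    1 / M ≤ (∑ i ∈ Finset.range (k + 1), δ (m + (i : ℤ))) /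
        (∑ i ∈ Finset.range (k + 1), δ (m - 1 - (i : ℤ))) ∧
      (∑ i ∈ Finset.range (k + 1), δ (m + (i : ℤ))) /
        (∑ i ∈ Finset.range (k + 1), δ (m - 1 - (i : ℤ))) ≤ M

/-- The `M`-quasisymmetry condition for a map `h : ℝ → ℝ`. -/
def QSCond (h : ℝ → ℝ) (M : ℝ) : Prop :=
  ∀ (x t : ℝ), 0 < t →
    1 / M ≤ (h (x + t) - h x) / (h x - h (x - t)) ∧
      (h (x + t) - h x) / (h x - h (x - t)) ≤ M

noncomputable def Psum (δ : ℤ → ℝ) (a b : ℤ) : ℝ := ∑ j ∈ Finset.Icc a b, δ j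

section
variable (δ : ℤ → ℝ)

lemma Psum_nonneg (hpos : ∀ n, 0 < δ n) (a b : ℤ) : 0 ≤ Psum δ a b :=
  Finset.sum_nonneg fun i _ => (hpos i).le

lemma Psum_pos (hpos : ∀ n, 0 < δ n) {a b : ℤ} (h : a ≤ b) : 0 < Psum δ a b :=
  Finset.sum_pos (fun i _ => hpos i) (Finset.nonempty_Icc.2 h)

lemma Psum_mono (hpos : ∀ n, 0 < δ n) {a b a' b' : ℤ} (h1 : a' ≤ a) (h2 : b ≤ b') :
    Psum δ a b ≤ Psum δ a' b' :=
  Finset.sum_le_sum_of_subset_of_nonneg (Finset.Icc_subset_Icc h1 h2)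
    (fun i _ _ => (hpos i).le)

lemma Psum_add {a c c' b : ℤ} (h1 : a ≤ c') (hc' : c' = c + 1) (h2 : c ≤ b) :
    Psum δ a c + Psum δ c' b = Psum δ a b := by
  subst hc'
  unfold Psum
  have hd : Disjoint (Finset.Icc a c) (Finset.Icc (c+1) b) := by
    rw [Finset.disjoint_left]
    intro j hj1 hj2
    simp only [Finset.mem_Icc] at hj1 hj2
    omega
  have hu : Finset.Icc a c ∪ Finset.Icc (c+1) b = Finset.Icc a b := by
    ext j
    simp only [Finset.mem_union, Finset.mem_Icc]
    omega
  rw [← hu, Finset.sum_union hd]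

lemma Psum_single (a : ℤ) : Psum δ a a = δ a := by simp [Psum]

lemma sum_range_Icc (m : ℤ) (k : ℕ) :
    ∑ i ∈ Finset.range (k+1), δ (m + (i : ℤ)) = Psum δ m (m + k) := by
  induction k with
  | zero => simp [Psum]
  | succ k ih =>
    rw [Finset.sum_range_succ, ih]
    have h : Psum δ m (m + k) + Psum δ (m + k + 1) (m + (k+1 : ℕ)) = Psum δ m (m + (k+1:ℕ)) := by
      apply Psum_add δ (c := m + k) <;> push_cast <;> omega
    have h2 : Psum δ (m + k + 1) (m + (k+1 : ℕ)) = δ (m + (k+1:ℕ)) := by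
      rw [show (m + k + 1 : ℤ) = m + (k+1:ℕ) by push_cast; ring, Psum_single]
    rw [← h, h2]

lemma sum_range_Icc_neg (m : ℤ) (k : ℕ) :
    ∑ i ∈ Finset.range (k+1), δ (m - 1 - (i : ℤ)) = Psum δ (m - 1 - k) (m - 1) := by
  have hrefl := Finset.sum_range_reflect (fun i : ℕ => δ (m - 1 - (i : ℤ))) (k+1)
  rw [← hrefl]
  have : ∀ j ∈ Finset.range (k+1), δ (m - 1 - ((k + 1 - 1 - j : ℕ) : ℤ))
      = δ ((m - 1 - k) + (j : ℤ)) := by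
    intro j hj
    rw [Finset.mem_range] at hj
    congr 1
    omega
  rw [Finset.sum_congr rfl this, sum_range_Icc]
  congr 1
  ring

end

section
variable {δ : ℤ → ℝ} {M : ℝ} (hM : 1 ≤ M) (hpos : ∀ n, 0 < δ n) (hshear : ShearQS δ M)

include hpos hshear

lemma shear_le' {m e c d : ℤ} (hme : m ≤ e) (hd : d = m - 1) (hc : e - m = d - c) :
    Psum δ m e ≤ M * Psum δ c d := by
  subst hd
  set k : ℕ := (e - m).toNat with hk
  have hke : m + (k : ℤ) = e := by omega
  have hkc : m - 1 - (k : ℤ) = c := by omega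
  obtain ⟨h1, h2⟩ := hshear m k
  rw [sum_range_Icc, sum_range_Icc_neg, hke, hkc] at h2
  have hT : 0 < Psum δ c (m - 1) := Psum_pos δ hpos (by omega)
  exact (div_le_iff₀ hT).mp h2

include hM in
lemma shear_ge' {m e c d : ℤ} (hme : m ≤ e) (hd : d = m - 1) (hc : e - m = d - c) :
    Psum δ c d ≤ M * Psum δ m e := by
  subst hd
  set k : ℕ := (e - m).toNat with hk
  have hke : m + (k : ℤ) = e := by omega
  have hkc : m - 1 - (k : ℤ) = c := by omega
  obtain ⟨h1, h2⟩ := hshear m k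
  rw [sum_range_Icc, sum_range_Icc_neg, hke, hkc] at h1
  have hT : 0 < Psum δ c (m - 1) := Psum_pos δ hpos (by omega)
  have hM0 : (0:ℝ) < M := by linarith
  have := (div_le_div_iff₀ hM0 hT).mp h1
  linarith

set_option maxHeartbeats 1000000 in
include hM in
lemma keyUp {n a b : ℤ} (h1 : n + 5 ≤ a) (h2 : b ≤ n - 5) (h3 : a ≤ 2*n - b + 1) :
    Psum δ n a ≤ 2 * M^2 * Psum δ (b+1) (n-1) := by
  have hM0 : (0:ℝ) < M := by linarith
  obtain ⟨e, he⟩ : ∃ e : ℤ, e = 2*n - b - 2 := ⟨_, rfl⟩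
  have hmain : Psum δ n e ≤ M * Psum δ (b+1) (n-1) :=
    shear_le' hpos hshear (by omega) (by omega) (by omega)
  have hDpos : 0 < Psum δ (b+1) (n-1) := Psum_pos δ hpos (by omega)
  have hMM : M ≤ 2 * M^2 := by nlinarith
  rcases le_or_gt a e with hae | hae
  · have h4 := Psum_mono δ hpos (le_refl n) hae
    nlinarith [mul_le_mul_of_nonneg_right hMM hDpos.le]
  · have hsplit : Psum δ n e + Psum δ (e+1) a = Psum δ n a :=
      Psum_add δ (a := n) (c := e) (c' := e+1) (b := a) (by omega) (by omega) (by omega)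
    have hextra : Psum δ (e+1) a ≤ M * Psum δ (2*e + 1 - a) e :=
      shear_le' hpos hshear (by omega) (by omega) (by omega)
    have hsub : Psum δ (2*e + 1 - a) e ≤ Psum δ n e :=
      Psum_mono δ hpos (by omega) (le_refl e)
    have c1 : M * Psum δ (2*e + 1 - a) e ≤ M * Psum δ n e :=
      mul_le_mul_of_nonneg_left hsub hM0.le
    have c2 : M * Psum δ n e ≤ M * (M * Psum δ (b+1) (n-1)) :=
      mul_le_mul_of_nonneg_left hmain hM0.le
    have c4 : M * (M * Psum δ (b+1) (n-1)) = M^2 * Psum δ (b+1) (n-1) := by ring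
    have c3 : M * Psum δ (b+1) (n-1) ≤ M^2 * Psum δ (b+1) (n-1) := by
      nlinarith [mul_le_mul_of_nonneg_right (show M ≤ M^2 by nlinarith) hDpos.le]
    linarith

set_option maxHeartbeats 1000000 in
include hM in
lemma keyDown {n a b : ℤ} (h1 : n + 5 ≤ a) (h2 : b ≤ n - 5) (h3 : 2*n - a ≤ b + 1) :
    Psum δ b n ≤ 2 * M^2 * Psum δ (n+1) (a-1) := by
  have hM0 : (0:ℝ) < M := by linarith
  obtain ⟨e, he⟩ : ∃ e : ℤ, e = 2*n + 1 - b := ⟨_, rfl⟩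
  have hmain : Psum δ b n ≤ M * Psum δ (n+1) e :=
    shear_ge' hM hpos hshear (by omega) (by omega) (by omega)
  have hNpos : 0 < Psum δ (n+1) (a-1) := Psum_pos δ hpos (by omega)
  have hMM : M ≤ 2 * M^2 := by nlinarith
  rcases le_or_gt e (a-1) with hea | hea
  · have h4 := Psum_mono δ hpos (le_refl (n+1)) hea
    nlinarith [mul_le_mul_of_nonneg_right hMM hNpos.le]
  · have hsplit : Psum δ (n+1) (a-1) + Psum δ a e = Psum δ (n+1) e :=
      Psum_add δ (a := n+1) (c := a-1) (c' := a) (b := e) (by omega) (by omega) (by omega)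
    have hextra : Psum δ a e ≤ M * Psum δ (2*a - 1 - e) (a-1) :=
      shear_le' hpos hshear (by omega) (by omega) (by omega)
    have hsub : Psum δ (2*a - 1 - e) (a-1) ≤ Psum δ (n+1) (a-1) :=
      Psum_mono δ hpos (by omega) (le_refl (a-1))
    have c1 : M * Psum δ (2*a - 1 - e) (a-1) ≤ M * Psum δ (n+1) (a-1) :=
      mul_le_mul_of_nonneg_left hsub hM0.le
    have c2 : M * Psum δ a e ≤ M * (M * Psum δ (n+1) (a-1)) := by
      apply mul_le_mul_of_nonneg_left _ hM0.le
      linarith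
    have c4 : M * (M * Psum δ (n+1) (a-1)) = M^2 * Psum δ (n+1) (a-1) := by ring
    have c3 : M * Psum δ (n+1) (a-1) ≤ M^2 * Psum δ (n+1) (a-1) := by
      nlinarith [mul_le_mul_of_nonneg_right (show M ≤ M^2 by nlinarith) hNpos.le]
    have hsplit2 : M * (Psum δ (n+1) (a-1) + Psum δ a e) = M * Psum δ (n+1) (a-1) + M * Psum δ a e := by ring
    have hmain2 : M * (Psum δ (n+1) (a-1) + Psum δ a e) = M * Psum δ (n+1) e := by rw [hsplit]
    linarith

end

lemma Hmap_succ (δ : ℤ → ℝ) (v : ℤ) : Hmap δ (v + 1) = Hmap δ v + δ v := by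
  unfold Hmap
  split_ifs with hA hB hB
  · have h1 : (v + 1).toNat = v.toNat + 1 := by omega
    rw [h1, Finset.sum_range_succ]
    congr 2
    omega
  · have hv : v = -1 := by omega
    subst hv
    norm_num
  · omega
  · have hk : (-v).toNat = (-(v+1)).toNat + 1 := by omega
    rw [hk, Finset.sum_range_succ']
    have hterm : ∀ j ∈ Finset.range (-(v+1)).toNat,
        δ (v + ((j : ℕ) + 1 : ℕ)) = δ (v + 1 + (j:ℕ)) := by
      intro j hj
      congr 1
      push_cast
      ring
    rw [Finset.sum_congr rfl hterm]
    push_cast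
    ring_nf

lemma Hmap_diff (δ : ℤ → ℝ) {u v : ℤ} (h : u ≤ v) :
    Hmap δ v - Hmap δ u = Psum δ u (v - 1) := by
  obtain ⟨k, hk⟩ : ∃ k : ℕ, v = u + k := ⟨(v - u).toNat, by omega⟩
  subst hk
  clear h
  induction k with
  | zero =>
    have hempty : Finset.Icc u (u + (0:ℕ) - 1) = ∅ := Finset.Icc_eq_empty (by omega)
    simp [Psum, hempty]
  | succ k ih =>
    have hc : (u + ((k:ℕ)+1:ℕ) : ℤ) = (u + (k:ℕ)) + 1 := by push_cast; ring
    rw [hc, Hmap_succ]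
    rw [show (u + (k:ℤ)) + 1 - 1 = u + (k:ℤ) by ring]
    have hadd : Psum δ u (u + (k:ℤ) - 1) + Psum δ (u + (k:ℤ)) (u + (k:ℤ)) = Psum δ u (u + (k:ℤ)) :=
      Psum_add δ (a := u) (c := u + (k:ℤ) - 1) (c' := u + (k:ℤ)) (b := u + (k:ℤ))
        (by omega) (by omega) (by omega)
    rw [Psum_single] at hadd
    have ih' : Hmap δ (u + (k:ℕ)) - Hmap δ u = Psum δ u (u + (k:ℕ) - 1) := ih
    linarith

lemma hdev_ge (δ : ℤ → ℝ) (hpos : ∀ n, 0 < δ n) (y : ℝ) : Hmap δ ⌊y⌋ ≤ hdev δ y := by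
  unfold hdev
  have h1 : (⌊y⌋ : ℝ) ≤ y := Int.floor_le y
  nlinarith [hpos ⌊y⌋]

lemma hdev_le (δ : ℤ → ℝ) (hpos : ∀ n, 0 < δ n) (y : ℝ) : hdev δ y ≤ Hmap δ (⌊y⌋ + 1) := by
  unfold hdev
  have h1 : y < (⌊y⌋ : ℝ) + 1 := Int.lt_floor_add_one y
  have h2 : Hmap δ (⌊y⌋ + 1) = Hmap δ ⌊y⌋ + δ ⌊y⌋ := Hmap_succ δ ⌊y⌋
  nlinarith [hpos ⌊y⌋]

theorem large_scale_quasisymmetry (M : ℝ) (hM : 1 ≤ M) (δ : ℤ → ℝ)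
    (hpos : ∀ n, 0 < δ n) (hshear : ShearQS δ M) :
    ∀ (x t : ℝ), 5 < t →
      1 / (3 * M ^ 3) ≤ (hdev δ (x + t) - hdev δ x) / (hdev δ x - hdev δ (x - t)) ∧
        (hdev δ (x + t) - hdev δ x) / (hdev δ x - hdev δ (x - t)) ≤ 3 * M ^ 3 := by
  intro x t ht
  have hM0 : (0:ℝ) < M := by linarith
  set n : ℤ := ⌊x⌋ with hn
  set a : ℤ := ⌊x + t⌋ with ha
  set b : ℤ := ⌊x - t⌋ with hb
  have hxl : (n : ℝ) ≤ x := Int.floor_le x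
  have hxu : x < (n : ℝ) + 1 := Int.lt_floor_add_one x
  have hal : (a : ℝ) ≤ x + t := Int.floor_le (x + t)
  have hau : x + t < (a : ℝ) + 1 := Int.lt_floor_add_one (x + t)
  have hbl : (b : ℝ) ≤ x - t := Int.floor_le (x - t)
  have hbu : x - t < (b : ℝ) + 1 := Int.lt_floor_add_one (x - t)
  have h1 : n + 5 ≤ a := by
    have : ((n + 5 : ℤ) : ℝ) ≤ x + t := by push_cast; linarith
    exact Int.le_floor.mpr this
  have h2 : b ≤ n - 5 := by
    have : x - t < ((n - 4 : ℤ) : ℝ) := by push_cast; linarith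
    have := Int.floor_lt.mpr this
    omega
  have h3 : a ≤ 2*n - b + 1 := by
    have hcast : (a : ℝ) < ((2*n - b + 2 : ℤ) : ℝ) := by push_cast; linarith
    have := Int.cast_lt.mp hcast
    omega
  have h4 : 2*n - a ≤ b + 1 := by
    have hcast : ((2*n - a - 1 : ℤ) : ℝ) < (b : ℝ) + 1 := by push_cast; linarith
    have : (2*n - a - 1 : ℤ) < b + 1 := by exact_mod_cast hcast
    omega
  -- bounds on hdev differences
  have e1 : hdev δ (x + t) - hdev δ x ≤ Psum δ n a := by
    have u1 : hdev δ (x + t) ≤ Hmap δ (a + 1) := hdev_le δ hpos (x + t)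
    have u2 : Hmap δ n ≤ hdev δ x := hdev_ge δ hpos x
    have u3 : Hmap δ (a + 1) - Hmap δ n = Psum δ n (a + 1 - 1) := Hmap_diff δ (by omega)
    rw [show a + 1 - 1 = a by ring] at u3
    linarith
  have e2 : Psum δ (n+1) (a-1) ≤ hdev δ (x + t) - hdev δ x := by
    have u1 : Hmap δ a ≤ hdev δ (x + t) := hdev_ge δ hpos (x + t)
    have u2 : hdev δ x ≤ Hmap δ (n + 1) := hdev_le δ hpos x
    have u3 : Hmap δ a - Hmap δ (n + 1) = Psum δ (n+1) (a - 1) := Hmap_diff δ (by omega)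
    linarith
  have e3 : hdev δ x - hdev δ (x - t) ≤ Psum δ b n := by
    have u1 : hdev δ x ≤ Hmap δ (n + 1) := hdev_le δ hpos x
    have u2 : Hmap δ b ≤ hdev δ (x - t) := hdev_ge δ hpos (x - t)
    have u3 : Hmap δ (n + 1) - Hmap δ b = Psum δ b (n + 1 - 1) := Hmap_diff δ (by omega)
    rw [show n + 1 - 1 = n by ring] at u3
    linarith
  have e4 : Psum δ (b+1) (n-1) ≤ hdev δ x - hdev δ (x - t) := by
    have u1 : Hmap δ n ≤ hdev δ x := hdev_ge δ hpos x
    have u2 : hdev δ (x - t) ≤ Hmap δ (b + 1) := hdev_le δ hpos (x - t)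
    have u3 : Hmap δ n - Hmap δ (b + 1) = Psum δ (b+1) (n - 1) := Hmap_diff δ (by omega)
    linarith
  have hNpos : 0 < hdev δ (x + t) - hdev δ x :=
    lt_of_lt_of_le (Psum_pos δ hpos (by omega)) e2
  have hDpos : 0 < hdev δ x - hdev δ (x - t) :=
    lt_of_lt_of_le (Psum_pos δ hpos (by omega)) e4
  have hup := keyUp hM hpos hshear h1 h2 h3
  have hdown := keyDown hM hpos hshear h1 h2 h4
  have hM3 : (0:ℝ) < 3 * M ^ 3 := by positivity
  have hcoef : 2 * M^2 ≤ 3 * M^3 := by nlinarith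
  constructor
  · rw [div_le_div_iff₀ hM3 hDpos]
    -- 1 * (D) ≤ N * (3M^3)
    have c1 : hdev δ x - hdev δ (x - t) ≤ 2 * M^2 * Psum δ (n+1) (a-1) := le_trans e3 hdown
    have c2 : 2 * M^2 * Psum δ (n+1) (a-1) ≤ 2 * M^2 * (hdev δ (x + t) - hdev δ x) :=
      mul_le_mul_of_nonneg_left e2 (by positivity)
    have c3 : 2 * M^2 * (hdev δ (x + t) - hdev δ x) ≤ 3 * M^3 * (hdev δ (x + t) - hdev δ x) :=
      mul_le_mul_of_nonneg_right hcoef hNpos.le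
    nlinarith
  · rw [div_le_iff₀ hDpos]
    have c1 : hdev δ (x + t) - hdev δ x ≤ 2 * M^2 * Psum δ (b+1) (n-1) := le_trans e1 hup
    have c2 : 2 * M^2 * Psum δ (b+1) (n-1) ≤ 2 * M^2 * (hdev δ x - hdev δ (x - t)) :=
      mul_le_mul_of_nonneg_left e4 (by positivity)
    have c3 : 2 * M^2 * (hdev δ x - hdev δ (x - t)) ≤ 3 * M^3 * (hdev δ x - hdev δ (x - t)) :=
      mul_le_mul_of_nonneg_right hcoef hDpos.le
    nlinarith
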